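/- Let m, s₁, s₂, s₃, s₄ be integers with m ≥ 1 and sᵢ ≥ 0 for all i. If s₁² + s₂² + s₃² + s₄² = m² − 1, s₁ + s₂ + s₃ + s₄ = 2(m − 1), and sᵢ + sⱼ ≤ m for all i ≠ j, then m = 1 and s₁ = s₂ = s₃ = s₄ = 0. -/
import Mathlib


/-- An arithmetic lemma: if `m ≥ 1`, `sᵢ ≥ 0`, `∑ sᵢ² = m² − 1`, `∑ sᵢ = 2(m − 1)` and
`sᵢ + sⱼ ≤ m` for all `i ≠ j`, then `m = 1` and all `sᵢ = 0`. -/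
theorem arithmetic_condition_on_sums (m : ℤ) (s : Fin 4 → ℤ)
    (hm : 1 ≤ m) (hs : ∀ i, 0 ≤ s i)
    (hsq : ∑ i, (s i) ^ 2 = m ^ 2 - 1)
    (hsum : ∑ i, s i = 2 * (m - 1))
    (hpair : ∀ i j, i ≠ j → s i + s j ≤ m) :
    m = 1 ∧ ∀ i, s i = 0 := by
  simp only [Fin.sum_univ_four] at hsq hsum
  have h01 := hpair 0 1 (by decide)
  have h23 := hpair 2 3 (by decide)
  have h02 := hpair 0 2 (by decide)
  have h13 := hpair 1 3 (by decide)
  have h03 := hpair 0 3 (by decide)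
  have h12 := hpair 1 2 (by decide)
  have p1 : 0 ≤ (m - s 0 - s 1) * (m - s 2 - s 3) :=
    mul_nonneg (by linarith) (by linarith)
  have p2 : 0 ≤ (m - s 0 - s 2) * (m - s 1 - s 3) :=
    mul_nonneg (by linarith) (by linarith)
  have p3 : 0 ≤ (m - s 0 - s 3) * (m - s 1 - s 2) :=
    mul_nonneg (by linarith) (by linarith)
  have hm2 : m ≤ 2 := by nlinarith [p1, p2, p3, hsq, hsum]
  have hparity : ∀ x : ℤ, x ^ 2 % 2 = x % 2 := by
    intro x
    obtain ⟨k, hk⟩ : Even (x ^ 2 + x) := by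
      have h := Int.even_mul_succ_self x
      have : x * (x + 1) = x ^ 2 + x := by ring
      rwa [this] at h
    omega
  have hm1 : m = 1 := by
    rcases (by omega : m = 1 ∨ m = 2) with h | h
    · exact h
    · exfalso
      subst h
      have e0 := hparity (s 0)
      have e1 := hparity (s 1)
      have e2 := hparity (s 2)
      have e3 := hparity (s 3)
      omega
  subst hm1
  refine ⟨rfl, fun i => ?_⟩
  have h0 := hs 0
  have h1 := hs 1
  have h2 := hs 2
  have h3 := hs 3
  have hz : s 0 = 0 ∧ s 1 = 0 ∧ s 2 = 0 ∧ s 3 = 0 := by omega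
  fin_cases i
  · exact hz.1
  · exact hz.2.1
  · exact hz.2.2.1
  · exact hz.2.2.2
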